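/- Suppose that after minimizing over the binary commitment variables the cost function c_i(g) = min{C_i(u,g) : (u,g) ∈ X_i} is convex with convex domain. Then a price p supports x_i* in the decentralized dispatch over X_i if and only if p supports x_i* in the modified decentralized dispatch over cl(X̃_i(ε_i)), for all ε_i with strictly positive components. -/
import Mathlib


/-- Proposition 1: if after minimizing over the binary commitment variables the cost
`c g = min{C (u,g) : (u,g) ∈ X}` is a convex function with convex domain, then a price
`p` supports `x*` in the decentralized dispatch over `X` iff it supports `x*` in the
modified decentralized dispatch over `cl(X̃(ε))`, for all `ε` with positive components. -/
theorem stmt7 {T : ℕ}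
    (X : Set ((Fin T → ℝ) × (Fin T → ℝ)))
    (hXc : IsCompact X) (hXne : X.Nonempty)
    (hbin : ∀ x ∈ X, ∀ t, x.1 t = 0 ∨ x.1 t = 1)
    (hpos : ∀ x ∈ X, ∀ t, 0 ≤ x.2 t)
    (C : ((Fin T → ℝ) × (Fin T → ℝ)) → ℝ)
    (hC : ContinuousOn C X)
    (c : (Fin T → ℝ) → ℝ)
    (D : Set (Fin T → ℝ)) (hDdef : D = {g | ∃ u, (u, g) ∈ X})
    (hcdef : ∀ g ∈ D, IsLeast {v | ∃ u, (u, g) ∈ X ∧ v = C (u, g)} (c g))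
    (hDconv : Convex ℝ D) (hcconv : ConvexOn ℝ D c)
    (xstar : (Fin T → ℝ) × (Fin T → ℝ))
    (Ωbar Ψ : Set ((Fin T → ℝ) × (Fin T → ℝ)))
    (hΩbar : Ωbar ⊆ X)
    (hΨdef : Ψ = {x | x ∈ X ∧ ∀ y ∈ X, C x ≤ C y})
    (hxstar : xstar ∈ Ωbar)
    (Xt : (Fin T → ℝ) → Set ((Fin T → ℝ) × (Fin T → ℝ)))
    (hXt : ∀ ε, Xt ε = Ψ ∪ ⋃ xb ∈ Ωbar, {x | x ∈ X ∧ ∀ t, |x.2 t - xb.2 t| ≤ ε t})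
    (p : Fin T → ℝ) (ε : Fin T → ℝ) (hε : ∀ t, 0 < ε t) :
    (∀ x ∈ X,
        (∑ t, p t * x.2 t) - C x ≤ (∑ t, p t * xstar.2 t) - C xstar) ↔
    (∀ x ∈ closure (Xt ε),
        (∑ t, p t * x.2 t) - C x ≤ (∑ t, p t * xstar.2 t) - C xstar) := by
  have hXclosed : IsClosed X := hXc.isClosed
  have hXtsub : Xt ε ⊆ X := by
    rw [hXt]
    rintro x (hx | hx)
    · rw [hΨdef] at hx; exact hx.1
    · simp only [Set.mem_iUnion] at hx
      obtain ⟨xb, hxb, hx⟩ := hx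
      exact hx.1
  have hclsub : closure (Xt ε) ⊆ X := hXclosed.closure_subset_iff.mpr hXtsub
  constructor
  · intro h x hx; exact h x (hclsub hx)
  · intro h x hx
    have hxstarX : xstar ∈ X := hΩbar hxstar
    have hgstarD : xstar.2 ∈ D := by rw [hDdef]; exact ⟨xstar.1, by simpa using hxstarX⟩
    have hls := hcdef _ hgstarD
    obtain ⟨u', hu'X, hu'C⟩ := hls.1
    have hmemXt : ∀ y ∈ X, (∀ t, |y.2 t - xstar.2 t| ≤ ε t) →
        (∑ t, p t * y.2 t) - C y ≤ (∑ t, p t * xstar.2 t) - C xstar := by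
      intro y hyX hyε
      refine h y (subset_closure ?_)
      rw [hXt]
      right
      simp only [Set.mem_iUnion]
      exact ⟨xstar, hxstar, hyX, hyε⟩
    have hCxstar : C xstar = c xstar.2 := by
      have h1 : c xstar.2 ≤ C xstar := hls.2 ⟨xstar.1, by simpa using hxstarX, by simp⟩
      have h2 := hmemXt (u', xstar.2) hu'X (by intro t; simpa using (hε t).le)
      simp only at h2
      rw [← hu'C] at h2
      linarith
    -- local optimality of g ↦ ∑ p t * g t - c g near xstar.2 on D
    have hlocal : ∀ g ∈ D, (∀ t, |g t - xstar.2 t| ≤ ε t) →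
        (∑ t, p t * g t) - c g ≤ (∑ t, p t * xstar.2 t) - c xstar.2 := by
      intro g hgD hgε
      obtain ⟨⟨u'', hu''X, hu''C⟩, _⟩ := hcdef g hgD
      have h2 := hmemXt (u'', g) hu''X (by intro t; simpa using hgε t)
      simp only at h2
      rw [← hu''C, hCxstar] at h2
      exact h2
    -- global optimality via convexity
    have hgD : x.2 ∈ D := by rw [hDdef]; exact ⟨x.1, by simpa using hx⟩
    obtain ⟨ε0, hε0pos, hε0le⟩ : ∃ ε0 > 0, ∀ t, ε0 ≤ ε t := by
      rcases isEmpty_or_nonempty (Fin T) with hT | hT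
      · exact ⟨1, one_pos, fun t => isEmptyElim t⟩
      · refine ⟨Finset.univ.inf' Finset.univ_nonempty ε, ?_, ?_⟩
        · simp only [gt_iff_lt, Finset.lt_inf'_iff]; exact fun t _ => hε t
        · intro t; exact Finset.inf'_le _ (Finset.mem_univ t)
    set M := ∑ t, |x.2 t - xstar.2 t| with hMdef
    have hM0 : 0 ≤ M := Finset.sum_nonneg fun t _ => abs_nonneg _
    have hMt : ∀ t, |x.2 t - xstar.2 t| ≤ M := fun t =>
      Finset.single_le_sum (f := fun t => |x.2 t - xstar.2 t|)
        (fun i _ => abs_nonneg _) (Finset.mem_univ t)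
    set lam := min 1 (ε0 / (M + 1)) with hlamdef
    have hdivpos : 0 < ε0 / (M + 1) := div_pos hε0pos (by linarith)
    have hlam0 : 0 < lam := lt_min one_pos hdivpos
    have hlam1 : lam ≤ 1 := min_le_left _ _
    set gl : Fin T → ℝ := fun t => xstar.2 t + lam * (x.2 t - xstar.2 t) with hgl
    have hglsmul : gl = (1 - lam) • xstar.2 + lam • x.2 := by
      funext t
      simp only [hgl, Pi.add_apply, Pi.smul_apply, smul_eq_mul]
      ring
    have hglD : gl ∈ D := by
      rw [hglsmul]
      exact hDconv hgstarD hgD (by linarith) hlam0.le (by ring)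
    have hglε : ∀ t, |gl t - xstar.2 t| ≤ ε t := by
      intro t
      have heq : gl t - xstar.2 t = lam * (x.2 t - xstar.2 t) := by
        simp only [hgl]; ring
      rw [heq, abs_mul, abs_of_pos hlam0]
      calc lam * |x.2 t - xstar.2 t| ≤ (ε0 / (M + 1)) * M :=
            mul_le_mul (min_le_right _ _) (hMt t) (abs_nonneg _) hdivpos.le
        _ ≤ ε0 := by
            rw [div_mul_eq_mul_div, div_le_iff₀ (by linarith : (0:ℝ) < M + 1)]
            nlinarith
        _ ≤ ε t := hε0le t
    have hloc := hlocal gl hglD hglε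
    have hconc : c gl ≤ (1 - lam) * c xstar.2 + lam * c x.2 := by
      have := hcconv.2 hgstarD hgD (by linarith : (0:ℝ) ≤ 1 - lam) hlam0.le (by ring)
      rw [hglsmul]
      simpa [smul_eq_mul] using this
    have hlin : ∑ t, p t * gl t =
        (1 - lam) * ∑ t, p t * xstar.2 t + lam * ∑ t, p t * x.2 t := by
      rw [Finset.mul_sum, Finset.mul_sum, ← Finset.sum_add_distrib]
      exact Finset.sum_congr rfl fun t _ => by simp only [hgl]; ring
    have hφ : (∑ t, p t * x.2 t) - c x.2 ≤ (∑ t, p t * xstar.2 t) - c xstar.2 := by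
      rw [hlin] at hloc
      have hkey : lam * ((∑ t, p t * x.2 t) - c x.2) ≤
          lam * ((∑ t, p t * xstar.2 t) - c xstar.2) := by nlinarith
      exact le_of_mul_le_mul_left (by linarith) hlam0
    have hcx : c x.2 ≤ C x := (hcdef _ hgD).2 ⟨x.1, by simpa using hx, by simp⟩
    rw [hCxstar]
    linarith
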